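/- Let P, Q, Γ be symmetric positive definite matrices, A a matrix with PA + AᵀP ≤ -Q, and Pb = C. Consider V(x₁,x₂,λ) = x₁ᵀPx₁ + x₂ᵀΓ⁻¹x₂ + (D_v/γ)λ² along solutions of system (11): ẋ₁ = Ax₁ + bφ(t)ᵀx₂ + b·v(t,λ), ẋ₂ = -Γφ(t)Cᵀx₁, λ̇ = -γ|Cᵀx₁|, where |v(t,λ)| ≤ D_v·λ for all t and all λ ≥ 0, and λ(t) ≥ 0 along the solution. Then along any such solution, dV/dt ≤ -x₁ᵀQx₁. -/

import Mathlib

open Matrix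

lemma hasDerivAt_dot {n : ℕ} {f g : ℝ → Fin n → ℝ} {f' g' : Fin n → ℝ} {t : ℝ}
    (hf : HasDerivAt f f' t) (hg : HasDerivAt g g' t) :
    HasDerivAt (fun s => f s ⬝ᵥ g s) (f' ⬝ᵥ g t + f t ⬝ᵥ g') t := by
  have h : ∀ i ∈ Finset.univ, HasDerivAt (fun s => f s i * g s i)
      (f' i * g t i + f t i * g' i) t := fun i _ =>
    (hasDerivAt_pi.1 hf i).mul (hasDerivAt_pi.1 hg i)
  have := HasDerivAt.fun_sum h
  simpa [dotProduct, Finset.sum_add_distrib] using this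

lemma hasDerivAt_mulVec {n p : ℕ} {M : Matrix (Fin p) (Fin n) ℝ} {f : ℝ → Fin n → ℝ}
    {f' : Fin n → ℝ} {t : ℝ} (hf : HasDerivAt f f' t) :
    HasDerivAt (fun s => M.mulVec (f s)) (M.mulVec f') t := by
  refine hasDerivAt_pi.2 fun i => ?_
  have := hasDerivAt_dot (hasDerivAt_const t (M i)) hf
  simpa [Matrix.mulVec, dotProduct] using this

theorem stmt_14 (k m : ℕ)
    (P Q : Matrix (Fin k) (Fin k) ℝ) (Γ : Matrix (Fin m) (Fin m) ℝ)
    (A : Matrix (Fin k) (Fin k) ℝ) (b C : Fin k → ℝ)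
    (hP : P.PosDef) (hQ : Q.PosDef) (hΓ : Γ.PosDef)
    (hLyap : (-(P * A + Aᵀ * P + Q)).PosSemidef)
    (hPb : P.mulVec b = C)
    (γ Dv : ℝ) (hγ : 0 < γ) (hDv : 0 < Dv)
    (φ : ℝ → Fin m → ℝ) (hφ : Continuous φ)
    (v : ℝ → ℝ → ℝ)
    (hv0 : ∀ t, v t 0 = 0)
    (hvbound : ∀ t lam, 0 ≤ lam → |v t lam| ≤ Dv * lam)
    (x₁ : ℝ → Fin k → ℝ) (x₂ : ℝ → Fin m → ℝ) (lam : ℝ → ℝ)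
    (hlam : ∀ t, 0 ≤ lam t)
    (hode : ∀ t : ℝ,
      HasDerivAt x₁ (A.mulVec (x₁ t) + (φ t ⬝ᵥ x₂ t) • b + v t (lam t) • b) t ∧
      HasDerivAt x₂ (-((C ⬝ᵥ x₁ t) • Γ.mulVec (φ t))) t ∧
      HasDerivAt lam (-γ * |C ⬝ᵥ x₁ t|) t)
    (V : ℝ → ℝ)
    (hV : ∀ t, V t = x₁ t ⬝ᵥ P.mulVec (x₁ t) + x₂ t ⬝ᵥ Γ⁻¹.mulVec (x₂ t) +
      (Dv / γ) * (lam t) ^ 2) :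
    ∀ t : ℝ, ∃ d : ℝ, HasDerivAt V d t ∧ d ≤ -(x₁ t ⬝ᵥ Q.mulVec (x₁ t)) := by
  intro t
  obtain ⟨h1, h2, h3⟩ := hode t
  set x₁' : Fin k → ℝ := A.mulVec (x₁ t) + (φ t ⬝ᵥ x₂ t) • b + v t (lam t) • b with hx₁'
  set x₂' : Fin m → ℝ := -((C ⬝ᵥ x₁ t) • Γ.mulVec (φ t)) with hx₂'
  set lam' : ℝ := -γ * |C ⬝ᵥ x₁ t| with hlam'
  have hd1 : HasDerivAt (fun s => x₁ s ⬝ᵥ P.mulVec (x₁ s))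
      (x₁' ⬝ᵥ P.mulVec (x₁ t) + x₁ t ⬝ᵥ P.mulVec x₁') t :=
    hasDerivAt_dot h1 (hasDerivAt_mulVec h1)
  have hd2 : HasDerivAt (fun s => x₂ s ⬝ᵥ Γ⁻¹.mulVec (x₂ s))
      (x₂' ⬝ᵥ Γ⁻¹.mulVec (x₂ t) + x₂ t ⬝ᵥ Γ⁻¹.mulVec x₂') t :=
    hasDerivAt_dot h2 (hasDerivAt_mulVec h2)
  have hd3 : HasDerivAt (fun s => (Dv / γ) * (lam s) ^ 2)
      ((Dv / γ) * (2 * lam t * lam')) t := by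
    have := (h3.pow 2).const_mul (Dv / γ)
    simpa [mul_comm, mul_assoc, mul_left_comm] using this
  set d : ℝ := (x₁' ⬝ᵥ P.mulVec (x₁ t) + x₁ t ⬝ᵥ P.mulVec x₁') +
      (x₂' ⬝ᵥ Γ⁻¹.mulVec (x₂ t) + x₂ t ⬝ᵥ Γ⁻¹.mulVec x₂') +
      (Dv / γ) * (2 * lam t * lam') with hd
  refine ⟨d, ?_, ?_⟩
  · have hVeq : V = fun s => x₁ s ⬝ᵥ P.mulVec (x₁ s) + x₂ s ⬝ᵥ Γ⁻¹.mulVec (x₂ s) +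
        (Dv / γ) * (lam s) ^ 2 := funext hV
    rw [hVeq]
    exact (hd1.add hd2).add hd3
  · -- algebra
    have hPsymm : Pᵀ = P := by
      rw [← conjTranspose_eq_transpose_of_trivial]; exact hP.1
    have hGsymm : Γᵀ = Γ := by
      rw [← conjTranspose_eq_transpose_of_trivial]; exact hΓ.1
    have hGinv : (Γ⁻¹)ᵀ = Γ⁻¹ := by rw [Matrix.transpose_nonsing_inv, hGsymm]
    have hGunit : IsUnit Γ.det := isUnit_iff_ne_zero.2 hΓ.det_pos.ne'
    have hGmul : Γ⁻¹ * Γ = 1 := Matrix.nonsing_inv_mul Γ hGunit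
    set c : ℝ := C ⬝ᵥ x₁ t with hc
    set p : ℝ := φ t ⬝ᵥ x₂ t with hp
    set w : ℝ := v t (lam t) with hw
    have f1 : b ⬝ᵥ P.mulVec (x₁ t) = c := by
      rw [dotProduct_mulVec, ← hPsymm, vecMul_transpose, hPb]
    have f2 : x₁ t ⬝ᵥ P.mulVec b = c := by
      rw [hPb, dotProduct_comm]
    have e1 : x₁' ⬝ᵥ P.mulVec (x₁ t) =
        A.mulVec (x₁ t) ⬝ᵥ P.mulVec (x₁ t) + p * c + w * c := by
      simp [hx₁', add_dotProduct, smul_dotProduct, f1, smul_eq_mul]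
    have e2 : x₁ t ⬝ᵥ P.mulVec x₁' =
        x₁ t ⬝ᵥ P.mulVec (A.mulVec (x₁ t)) + p * c + w * c := by
      simp [hx₁', Matrix.mulVec_add, Matrix.mulVec_smul, dotProduct_add,
        dotProduct_smul, f2, smul_eq_mul]
    have key : Γ⁻¹.mulVec (Γ.mulVec (φ t)) = φ t := by
      rw [Matrix.mulVec_mulVec, hGmul, Matrix.one_mulVec]
    have e3 : x₂' ⬝ᵥ Γ⁻¹.mulVec (x₂ t) = -(c * p) := by
      have : Γ.mulVec (φ t) ⬝ᵥ Γ⁻¹.mulVec (x₂ t) = p := by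
        rw [dotProduct_mulVec, ← hGinv, vecMul_transpose, key]
      simp [hx₂', neg_dotProduct, smul_dotProduct, this, smul_eq_mul]
    have e4 : x₂ t ⬝ᵥ Γ⁻¹.mulVec x₂' = -(c * p) := by
      simp [hx₂', Matrix.mulVec_neg, Matrix.mulVec_smul, dotProduct_neg,
        dotProduct_smul, key, smul_eq_mul, dotProduct_comm (x₂ t) (φ t), mul_comm]
      exact Or.inl hp.symm
    have e5 : A.mulVec (x₁ t) ⬝ᵥ P.mulVec (x₁ t) + x₁ t ⬝ᵥ P.mulVec (A.mulVec (x₁ t))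
        + x₁ t ⬝ᵥ Q.mulVec (x₁ t) ≤ 0 := by
      have h0 := hLyap.dotProduct_mulVec_nonneg (x₁ t)
      have hrw : star (x₁ t) = x₁ t := by simp
      rw [hrw] at h0
      have h1 : x₁ t ⬝ᵥ (-(P * A + Aᵀ * P + Q)).mulVec (x₁ t)
          = -(x₁ t ⬝ᵥ P.mulVec (A.mulVec (x₁ t)))
            - (A.mulVec (x₁ t) ⬝ᵥ P.mulVec (x₁ t))
            - x₁ t ⬝ᵥ Q.mulVec (x₁ t) := by
        have a1 : x₁ t ⬝ᵥ (P * A).mulVec (x₁ t)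
            = x₁ t ⬝ᵥ P.mulVec (A.mulVec (x₁ t)) := by
          rw [← Matrix.mulVec_mulVec]
        have a2 : x₁ t ⬝ᵥ (Aᵀ * P).mulVec (x₁ t)
            = A.mulVec (x₁ t) ⬝ᵥ P.mulVec (x₁ t) := by
          rw [← Matrix.mulVec_mulVec, dotProduct_mulVec, vecMul_transpose]
        simp only [Matrix.neg_mulVec, Matrix.add_mulVec, dotProduct_neg,
          dotProduct_add]
        rw [a1, a2]; ring
      rw [h1] at h0
      linarith
    have e6 : (Dv / γ) * (2 * lam t * lam') = -(2 * Dv * lam t * |c|) := by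
      rw [hlam']; field_simp
    have e7 : w * c ≤ Dv * lam t * |c| := by
      calc w * c ≤ |w * c| := le_abs_self _
        _ = |w| * |c| := abs_mul _ _
        _ ≤ (Dv * lam t) * |c| :=
            mul_le_mul_of_nonneg_right (hvbound t (lam t) (hlam t)) (abs_nonneg _)
        _ = Dv * lam t * |c| := by ring
    rw [hd, e1, e2, e3, e4, e6]
    linarith
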